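/- Let α > 1 be a real number. The set of x ∈ (0,1] whose α-expansion digit sequence (d_i) is bounded has Lebesgue measure zero but Hausdorff dimension one. -/

import Mathlib

open MeasureTheory

/-- The α-expansion value ⟨d_i⟩_α = ∑_{i=1}^∞ (α-1)^{i-1} α^{-(d_1+⋯+d_i)},
with the digit sequence `d : ℕ → ℕ` indexed from 0 (so `d 0` is the first digit). -/
noncomputable def alphaExpansion (α : ℝ) (d : ℕ → ℕ) : ℝ :=
  ∑' i : ℕ, (α - 1) ^ i * α ^ (-((∑ j ∈ Finset.range (i + 1), d j : ℕ) : ℤ))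

open Finset

namespace AE

/-- the i-th term, in `pow`-inverse form -/
noncomputable def term (α : ℝ) (d : ℕ → ℕ) (i : ℕ) : ℝ :=
  (α - 1) ^ i * ((α ^ (∑ j ∈ Finset.range (i + 1), d j))⁻¹)

variable {α : ℝ} {d : ℕ → ℕ} {M : ℕ}

lemma val_eq (hα : 1 < α) (d : ℕ → ℕ) : alphaExpansion α d = ∑' i, term α d i := by
  unfold alphaExpansion term
  congr 1; funext i
  rw [zpow_neg, zpow_natCast]

lemma apos (hα : 1 < α) : (0:ℝ) < α := lt_trans one_pos hα

lemma term_pos (hα : 1 < α) (i : ℕ) : 0 < term α d i := by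
  have h1 : (0:ℝ) < α - 1 := by linarith
  exact mul_pos (pow_pos h1 i) (inv_pos.2 (pow_pos (apos hα) _))

/-- geometric dominating sequence -/
noncomputable def geom (α : ℝ) (i : ℕ) : ℝ := α⁻¹ * ((α - 1) / α) ^ i

lemma ratio_nonneg (hα : 1 < α) : (0:ℝ) ≤ (α - 1)/α :=
  div_nonneg (by linarith) (apos hα).le

lemma ratio_lt_one (hα : 1 < α) : (α - 1)/α < 1 := by
  rw [div_lt_one (apos hα)]; linarith

lemma term_le_geom (hα : 1 < α) (hd : ∀ i, 1 ≤ d i) (i : ℕ) : term α d i ≤ geom α i := by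
  have hS : i + 1 ≤ ∑ j ∈ Finset.range (i + 1), d j := by
    calc i + 1 = ∑ _j ∈ Finset.range (i+1), 1 := by simp
    _ ≤ _ := Finset.sum_le_sum fun j _ => hd j
  have hpow : (α:ℝ) ^ (i+1) ≤ α ^ (∑ j ∈ Finset.range (i + 1), d j) :=
    pow_le_pow_right₀ hα.le hS
  have h1 : ((α ^ (∑ j ∈ Finset.range (i + 1), d j))⁻¹ : ℝ) ≤ (α ^ (i+1))⁻¹ :=
    inv_anti₀ (pow_pos (apos hα) _) hpow
  have h2 : term α d i ≤ (α - 1)^i * (α ^ (i+1))⁻¹ := by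
    exact mul_le_mul_of_nonneg_left h1 (pow_nonneg (by linarith) i)
  refine h2.trans_eq ?_
  unfold geom
  rw [div_pow, pow_succ]
  have hα0 : (α:ℝ) ≠ 0 := (apos hα).ne'
  field_simp

lemma summable_geom (hα : 1 < α) : Summable (geom α) :=
  (summable_geometric_of_lt_one (ratio_nonneg hα) (ratio_lt_one hα)).mul_left _

lemma tsum_geom (hα : 1 < α) : ∑' i, geom α i = 1 := by
  unfold geom
  rw [tsum_mul_left, tsum_geometric_of_lt_one (ratio_nonneg hα) (ratio_lt_one hα)]
  have hα0 : (α:ℝ) ≠ 0 := (apos hα).ne'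
  have : 1 - (α - 1)/α = α⁻¹ := by field_simp; ring
  rw [this, inv_inv]
  field_simp

lemma summable_term (hα : 1 < α) (hd : ∀ i, 1 ≤ d i) : Summable (term α d) :=
  Summable.of_nonneg_of_le (fun i => (term_pos hα i).le) (term_le_geom hα hd) (summable_geom hα)

lemma val_le_one (hα : 1 < α) (hd : ∀ i, 1 ≤ d i) : alphaExpansion α d ≤ 1 := by
  rw [val_eq hα]
  calc ∑' i, term α d i ≤ ∑' i, geom α i :=
        Summable.tsum_le_tsum (term_le_geom hα hd) (summable_term hα hd) (summable_geom hα)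
  _ = 1 := tsum_geom hα

lemma val_pos (hα : 1 < α) (hd : ∀ i, 1 ≤ d i) : 0 < alphaExpansion α d := by
  rw [val_eq hα]
  exact Summable.tsum_pos (summable_term hα hd) (fun i => (term_pos hα i).le) 0 (term_pos hα 0)

/-- contraction ratio of digit k -/
noncomputable def rr (α : ℝ) (k : ℕ) : ℝ := (α - 1) * (α ^ k)⁻¹

lemma rr_pos (hα : 1 < α) (k : ℕ) : 0 < rr α k :=
  mul_pos (by linarith) (inv_pos.2 (pow_pos (apos hα) _))

/-- product of ratios over the first n digits -/
noncomputable def RR (α : ℝ) (d : ℕ → ℕ) (n : ℕ) : ℝ := ∏ j ∈ Finset.range n, rr α (d j)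

lemma RR_pos (hα : 1 < α) (d : ℕ → ℕ) (n : ℕ) : 0 < RR α d n :=
  Finset.prod_pos fun j _ => rr_pos hα _

lemma RR_eq (hα : 1 < α) (d : ℕ → ℕ) (n : ℕ) :
    RR α d n = (α - 1) ^ n * ((α ^ (∑ j ∈ Finset.range n, d j))⁻¹) := by
  unfold RR rr
  rw [Finset.prod_mul_distrib, Finset.prod_const, Finset.prod_inv_distrib,
    Finset.prod_pow_eq_pow_sum, Finset.card_range]

/-- prefix decomposition -/
lemma prefix_eq (hα : 1 < α) (hd : ∀ i, 1 ≤ d i) (n : ℕ) :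
    alphaExpansion α d = (∑ i ∈ Finset.range n, term α d i)
      + RR α d n * alphaExpansion α (fun i => d (i + n)) := by
  have hsum := summable_term hα hd
  have hd' : ∀ i, 1 ≤ d (i + n) := fun i => hd _
  rw [val_eq hα, ← Summable.sum_add_tsum_nat_add n hsum, val_eq hα]
  congr 1
  rw [← tsum_mul_left]
  congr 1; funext i
  have hS : ∑ j ∈ Finset.range (i + n + 1), d j
      = (∑ j ∈ Finset.range n, d j) + ∑ j ∈ Finset.range (i+1), d (j + n) := by
    have := Finset.sum_range_add d n (i+1)
    rw [show n + (i+1) = i + n + 1 by ring] at this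
    rw [this]
    congr 1
    exact Finset.sum_congr rfl fun j _ => by rw [add_comm]
  unfold term
  rw [RR_eq hα, hS, pow_add, pow_add]
  have hα0 : (α:ℝ) ≠ 0 := (apos hα).ne'
  rw [mul_inv]
  ring

end AE

namespace AE
variable {α : ℝ} {d d' : ℕ → ℕ} {M : ℕ}

lemma partial_le_val (hα : 1 < α) (hd : ∀ i, 1 ≤ d i) (n : ℕ) :
    ∑ i ∈ Finset.range n, term α d i ≤ alphaExpansion α d := by
  rw [val_eq hα]
  exact Summable.sum_le_tsum _ (fun i _ => (term_pos hα i).le) (summable_term hα hd)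

lemma val_mem_Icc (hα : 1 < α) (hd : ∀ i, 1 ≤ d i) (n : ℕ) :
    alphaExpansion α d ∈ Set.Icc (∑ i ∈ Finset.range n, term α d i)
      ((∑ i ∈ Finset.range n, term α d i) + RR α d n) := by
  constructor
  · exact partial_le_val hα hd n
  · rw [prefix_eq hα hd n]
    have h1 : alphaExpansion α (fun i => d (i + n)) ≤ 1 := val_le_one hα fun i => hd _
    have h2 : 0 < RR α d n := RR_pos hα d n
    nlinarith

lemma term_congr (h : ∀ j < n+1, d j = d' j) : term α d n = term α d' n := by
  unfold term
  have hs : ∑ j ∈ Finset.range (n+1), d j = ∑ j ∈ Finset.range (n+1), d' j :=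
    Finset.sum_congr rfl fun j hj => h j (Finset.mem_range.mp hj)
  rw [hs]

lemma partial_congr {n : ℕ} (h : ∀ j < n, d j = d' j) :
    (∑ i ∈ Finset.range n, term α d i) = ∑ i ∈ Finset.range n, term α d' i := by
  refine Finset.sum_congr rfl fun i hi => term_congr fun j hj => h j ?_
  have := Finset.mem_range.mp hi; omega

lemma RR_congr {n : ℕ} (h : ∀ j < n, d j = d' j) : RR α d n = RR α d' n :=
  Finset.prod_congr rfl fun j hj => by rw [h j (Finset.mem_range.mp hj)]

/-- upper bound via the first digit -/
lemma val_le_first (hα : 1 < α) (hd : ∀ i, 1 ≤ d i) :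
    alphaExpansion α d ≤ α * (α ^ (d 0))⁻¹ := by
  have h := prefix_eq hα hd 1
  have h1 : alphaExpansion α (fun i => d (i + 1)) ≤ 1 := val_le_one hα fun i => hd _
  have h1' : 0 < alphaExpansion α (fun i => d (i + 1)) := val_pos hα fun i => hd _
  have hRR : RR α d 1 = (α - 1) * (α ^ (d 0))⁻¹ := by
    unfold RR; rw [Finset.prod_range_one]; rfl
  have hA : (∑ i ∈ Finset.range 1, term α d i) = (α ^ (d 0))⁻¹ := by
    rw [Finset.sum_range_one]
    unfold term
    rw [pow_zero, one_mul, Finset.sum_range_one]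
  rw [h, hA, hRR]
  have hr : (0:ℝ) < (α ^ (d 0))⁻¹ := inv_pos.2 (pow_pos (apos hα) _)
  have hm : (α - 1) * (α ^ (d 0))⁻¹ * alphaExpansion α (fun i => d (i + 1))
      ≤ (α - 1) * (α ^ (d 0))⁻¹ * 1 := by
    exact mul_le_mul_of_nonneg_left h1 (mul_nonneg (by linarith) hr.le)
  rw [mul_one] at hm
  nlinarith

/-- core separation: smaller first digit gives strictly larger value, with a gap -/
lemma sep_core (hα : 1 < α) (hd : ∀ i, 1 ≤ d i) (hd' : ∀ i, 1 ≤ d' i)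
    (hd'M : ∀ i, d' i ≤ M) (hlt : d' 0 < d 0) :
    alphaExpansion α d + (α - 1) * (α ^ (2*M))⁻¹ ≤ alphaExpansion α d' := by
  have hpos : (0:ℝ) < α := apos hα
  -- Here d' 0 < d 0, so val d ≤ α^{-d0+1} ≤ α^{-d'0} and val d' ≥ t0 + t1.
  have h1 : alphaExpansion α d ≤ α * (α ^ (d 0))⁻¹ := val_le_first hα hd
  have h2 : α * (α ^ (d 0))⁻¹ ≤ (α ^ (d' 0))⁻¹ := by
    have hle : (α:ℝ) ^ (d' 0 + 1) ≤ α ^ (d 0) := pow_le_pow_right₀ hα.le (by omega)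
    have := inv_anti₀ (pow_pos hpos (d' 0 + 1)) hle
    calc α * (α ^ (d 0))⁻¹ ≤ α * (α ^ (d' 0 + 1))⁻¹ := by
          exact mul_le_mul_of_nonneg_left this hpos.le
    _ = (α ^ (d' 0))⁻¹ := by rw [pow_succ]; field_simp
  have h3 : (α ^ (d' 0))⁻¹ + (α - 1) * (α ^ (∑ j ∈ Finset.range 2, d' j))⁻¹
      ≤ alphaExpansion α d' := by
    have := partial_le_val hα hd' 2
    rw [Finset.sum_range_succ, Finset.sum_range_one] at this
    have ht0 : term α d' 0 = (α ^ (d' 0))⁻¹ := by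
      unfold term; rw [pow_zero, one_mul, Finset.sum_range_one]
    have ht1 : term α d' 1 = (α - 1) * (α ^ (∑ j ∈ Finset.range 2, d' j))⁻¹ := by
      unfold term; rw [pow_one]
    rw [ht0, ht1] at this; exact this
  have h4 : (α - 1) * (α ^ (2*M))⁻¹ ≤ (α - 1) * (α ^ (∑ j ∈ Finset.range 2, d' j))⁻¹ := by
    apply mul_le_mul_of_nonneg_left _ (by linarith : (0:ℝ) ≤ α - 1)
    apply inv_anti₀ (pow_pos hpos _)
    apply pow_le_pow_right₀ hα.le
    rw [Finset.sum_range_succ, Finset.sum_range_one]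
    have := hd'M 0; have := hd'M 1; omega
  linarith

/-- separation of values when the first digits differ -/
lemma sep_first (hα : 1 < α) (hd : ∀ i, 1 ≤ d i) (hd' : ∀ i, 1 ≤ d' i)
    (hdM : ∀ i, d i ≤ M) (hd'M : ∀ i, d' i ≤ M) (hne : d 0 ≠ d' 0) :
    (α - 1) * (α ^ (2*M))⁻¹ ≤ |alphaExpansion α d - alphaExpansion α d'| := by
  have hg : (0:ℝ) ≤ (α - 1) * (α ^ (2*M))⁻¹ :=
    mul_nonneg (by linarith) (inv_pos.2 (pow_pos (apos hα) _)).le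
  rcases lt_or_gt_of_ne hne with h | h
  · have := sep_core hα hd' hd hdM h
    rw [abs_of_nonneg (by linarith)]
    linarith
  · have := sep_core hα hd hd' hd'M h
    rw [abs_sub_comm, abs_of_nonneg (by linarith)]
    linarith

/-- separation of values when digits agree up to n and differ at n -/
lemma sep_at (hα : 1 < α) (hd : ∀ i, 1 ≤ d i) (hd' : ∀ i, 1 ≤ d' i)
    (hdM : ∀ i, d i ≤ M) (hd'M : ∀ i, d' i ≤ M) {n : ℕ}
    (hagree : ∀ j < n, d j = d' j) (hne : d n ≠ d' n) :
    (α - 1) * (α ^ (2*M))⁻¹ * RR α d n ≤ |alphaExpansion α d - alphaExpansion α d'| := by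
  have h1 := prefix_eq hα hd n
  have h2 := prefix_eq hα hd' n
  have hA := partial_congr (α := α) hagree
  have hR := RR_congr (α := α) hagree
  have hdiff : alphaExpansion α d - alphaExpansion α d'
      = RR α d n * (alphaExpansion α (fun i => d (i + n))
        - alphaExpansion α (fun i => d' (i + n))) := by
    rw [h1, h2, ← hA, ← hR]; ring
  have hsep := sep_first hα (d := fun i => d (i + n)) (d' := fun i => d' (i + n))
    (fun i => hd _) (fun i => hd' _) (fun i => hdM _) (fun i => hd'M _)
    (by simpa using hne)
  rw [hdiff, abs_mul, abs_of_pos (RR_pos hα d n), mul_comm (RR α d n)]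
  exact mul_le_mul_of_nonneg_right hsep (RR_pos hα d n).le
end AE

namespace AE
variable {α : ℝ} {d : ℕ → ℕ} {M : ℕ}

lemma sum_rr (hα : 1 < α) (M : ℕ) :
    ∑ k ∈ Finset.Icc 1 M, rr α k = 1 - (α ^ M)⁻¹ := by
  induction M with
  | zero => simp
  | succ m ih =>
    rw [Finset.sum_Icc_succ_top (by omega), ih]
    unfold rr
    have hα0 : (α:ℝ) ≠ 0 := (apos hα).ne'
    have hp : (α:ℝ) ^ m ≠ 0 := pow_ne_zero _ hα0
    rw [pow_succ]
    field_simp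
    ring

lemma rho_nonneg (hα : 1 < α) (M : ℕ) : (0:ℝ) ≤ 1 - (α ^ M)⁻¹ := by
  have h1 : (1:ℝ) ≤ α ^ M := one_le_pow₀ hα.le
  have := inv_le_one_of_one_le₀ h1
  linarith

lemma rho_lt_one (hα : 1 < α) (M : ℕ) : 1 - ((α:ℝ) ^ M)⁻¹ < 1 := by
  have : (0:ℝ) < (α ^ M)⁻¹ := inv_pos.2 (pow_pos (apos hα) _)
  linarith

lemma vol_EM (hα : 1 < α) (M : ℕ) :
    volume {x : ℝ | ∃ d : ℕ → ℕ,
      (∀ i, 1 ≤ d i) ∧ (∀ i, d i ≤ M) ∧ alphaExpansion α d = x} = 0 := by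
  classical
  set E := {x : ℝ | ∃ d : ℕ → ℕ,
      (∀ i, 1 ≤ d i) ∧ (∀ i, d i ≤ M) ∧ alphaExpansion α d = x} with hE
  set ρ : ℝ := 1 - (α ^ M)⁻¹ with hρ
  have key : ∀ n : ℕ, volume E ≤ ENNReal.ofReal (ρ ^ n) := by
    intro n
    set F := Fintype.piFinset (fun _ : Fin n => Finset.Icc 1 M) with hF
    set ext : (Fin n → ℕ) → (ℕ → ℕ) :=
      fun v j => if h : j < n then v ⟨j, h⟩ else 1 with hext
    have hcover : E ⊆ ⋃ v ∈ F, Set.Icc (∑ i ∈ Finset.range n, term α (ext v) i)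
        ((∑ i ∈ Finset.range n, term α (ext v) i) + RR α (ext v) n) := by
      rintro x ⟨d, hd1, hdM, rfl⟩
      have hvF : (fun j : Fin n => d j) ∈ F := by
        rw [Fintype.mem_piFinset]
        exact fun j => Finset.mem_Icc.mpr ⟨hd1 _, hdM _⟩
      refine Set.mem_biUnion hvF ?_
      · have hagree : ∀ j < n, ext (fun j : Fin n => d j) j = d j := by
          intro j hj; simp only [hext, dif_pos hj]
        rw [partial_congr (α := α) hagree, RR_congr (α := α) hagree]
        exact val_mem_Icc hα hd1 n
    calc volume E ≤ ∑ v ∈ F, volume (Set.Icc (∑ i ∈ Finset.range n, term α (ext v) i)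
        ((∑ i ∈ Finset.range n, term α (ext v) i) + RR α (ext v) n)) :=
          (measure_mono hcover).trans (measure_biUnion_finset_le F _)
    _ = ∑ v ∈ F, ENNReal.ofReal (RR α (ext v) n) := by
          refine Finset.sum_congr rfl fun v _ => ?_
          rw [Real.volume_Icc]; congr 1; ring
    _ = ENNReal.ofReal (∑ v ∈ F, RR α (ext v) n) :=
          (ENNReal.ofReal_sum_of_nonneg fun v _ => (RR_pos hα _ n).le).symm
    _ = ENNReal.ofReal (ρ ^ n) := by
          congr 1
          have h1 : ∀ v : Fin n → ℕ, RR α (ext v) n = ∏ j : Fin n, rr α (v j) := by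
            intro v
            unfold RR
            rw [Finset.prod_range]
            exact Finset.prod_congr rfl fun j _ => by
              simp only [hext, dif_pos j.is_lt]
          calc ∑ v ∈ F, RR α (ext v) n = ∑ v ∈ F, ∏ j : Fin n, rr α (v j) :=
                Finset.sum_congr rfl fun v _ => h1 v
          _ = ∏ _j : Fin n, ∑ k ∈ Finset.Icc 1 M, rr α k :=
                (Finset.prod_univ_sum _ _).symm
          _ = ρ ^ n := by rw [sum_rr hα, Finset.prod_const, Finset.card_univ,
                Fintype.card_fin]
  have h0 : (ENNReal.ofReal ρ) < 1 := by
    rw [ENNReal.ofReal_lt_one]; exact rho_lt_one hα M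
  have htend : Filter.Tendsto (fun n : ℕ => (ENNReal.ofReal ρ) ^ n)
      Filter.atTop (nhds 0) := ENNReal.tendsto_pow_atTop_nhds_zero_of_lt_one h0
  have hle : volume E ≤ 0 := by
    refine ge_of_tendsto htend (Filter.Eventually.of_forall fun n => ?_)
    calc volume E ≤ ENNReal.ofReal (ρ ^ n) := key n
    _ = (ENNReal.ofReal ρ) ^ n := ENNReal.ofReal_pow (rho_nonneg hα M) n
  exact le_antisymm hle zero_le

lemma vol_S (hα : 1 < α) :
    volume {x : ℝ | ∃ d : ℕ → ℕ,
      (∀ i, 1 ≤ d i) ∧ (∃ M : ℕ, ∀ i, d i ≤ M) ∧ alphaExpansion α d = x} = 0 := by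
  have hdecomp : {x : ℝ | ∃ d : ℕ → ℕ,
      (∀ i, 1 ≤ d i) ∧ (∃ M : ℕ, ∀ i, d i ≤ M) ∧ alphaExpansion α d = x}
      = ⋃ M : ℕ, {x : ℝ | ∃ d : ℕ → ℕ,
        (∀ i, 1 ≤ d i) ∧ (∀ i, d i ≤ M) ∧ alphaExpansion α d = x} := by
    ext x
    simp only [Set.mem_setOf_eq, Set.mem_iUnion]
    constructor
    · rintro ⟨d, h1, ⟨M, hM⟩, h3⟩; exact ⟨M, d, h1, hM, h3⟩
    · rintro ⟨M, d, h1, hM, h3⟩; exact ⟨d, h1, ⟨M, hM⟩, h3⟩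
  rw [hdecomp]
  exact measure_iUnion_null fun M => vol_EM hα M

end AE

namespace AE
variable {α s : ℝ} {d d' : ℕ → ℕ} {M : ℕ}

/-- normalizing constant -/
noncomputable def PP (α s : ℝ) (M : ℕ) : ℝ := ∑ k ∈ Finset.Icc 1 M, (rr α k) ^ s

/-- probability weights -/
noncomputable def pp (α s : ℝ) (M : ℕ) (k : ℕ) : ℝ := (rr α k) ^ s / PP α s M

/-- cumulative weights -/
noncomputable def qq (α s : ℝ) (M : ℕ) (k : ℕ) : ℝ := ∑ j ∈ Finset.Ico 1 k, pp α s M j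

lemma pp_pos (hα : 1 < α) (hP : 1 ≤ PP α s M) (k : ℕ) : 0 < pp α s M k :=
  div_pos (Real.rpow_pos_of_pos (rr_pos hα k) s) (by linarith)

lemma pp_le_rpow (hα : 1 < α) (hP : 1 ≤ PP α s M) (k : ℕ) :
    pp α s M k ≤ (rr α k) ^ s :=
  div_le_self (Real.rpow_pos_of_pos (rr_pos hα k) s).le hP

lemma rr_le_ratio (hα : 1 < α) {k : ℕ} (hk : 1 ≤ k) : rr α k ≤ (α - 1)/α := by
  unfold rr
  rw [div_eq_mul_inv]
  refine mul_le_mul_of_nonneg_left ?_ (by linarith)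
  refine inv_anti₀ (apos hα) ?_
  calc (α:ℝ) = α ^ 1 := (pow_one α).symm
  _ ≤ α ^ k := pow_le_pow_right₀ hα.le hk

/-- the uniform contraction bound for weights -/
noncomputable def cc (α s : ℝ) : ℝ := ((α - 1)/α) ^ s

lemma cc_nonneg (hα : 1 < α) : 0 ≤ cc α s := Real.rpow_nonneg (ratio_nonneg hα) s

lemma cc_lt_one (hα : 1 < α) (hs : 0 < s) : cc α s < 1 := by
  have h0 : (0:ℝ) < (α - 1)/α := div_pos (by linarith) (apos hα)
  exact Real.rpow_lt_one (ratio_nonneg hα) (ratio_lt_one hα) hs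

lemma pp_le_cc (hα : 1 < α) (hs : 0 < s) (hP : 1 ≤ PP α s M) {k : ℕ} (hk : 1 ≤ k) :
    pp α s M k ≤ cc α s := by
  refine (pp_le_rpow hα hP k).trans ?_
  exact Real.rpow_le_rpow (rr_pos hα k).le (rr_le_ratio hα hk) hs.le

lemma sum_pp (hα : 1 < α) (hP : 1 ≤ PP α s M) :
    ∑ k ∈ Finset.Icc 1 M, pp α s M k = 1 := by
  unfold pp
  rw [← Finset.sum_div]
  exact div_self (by unfold PP at *; linarith)

lemma qq_nonneg (hα : 1 < α) (hP : 1 ≤ PP α s M) (k : ℕ) : 0 ≤ qq α s M k :=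
  Finset.sum_nonneg fun j _ => (pp_pos hα hP j).le

lemma qq_add_pp_le_one (hα : 1 < α) (hP : 1 ≤ PP α s M) {k : ℕ} (hk1 : 1 ≤ k)
    (hkM : k ≤ M) : qq α s M k + pp α s M k ≤ 1 := by
  have h1 : qq α s M k + pp α s M k = ∑ j ∈ Finset.Icc 1 k, pp α s M j := by
    unfold qq
    rw [← Finset.sum_Ico_succ_top hk1, Finset.Ico_add_one_right_eq_Icc]
  rw [h1, ← sum_pp hα hP]
  exact Finset.sum_le_sum_of_subset_of_nonneg
    (Finset.Icc_subset_Icc_right hkM) (fun j _ _ => (pp_pos hα hP j).le)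

lemma qq_le_one (hα : 1 < α) (hP : 1 ≤ PP α s M) {k : ℕ} (hk1 : 1 ≤ k) (hkM : k ≤ M) :
    qq α s M k ≤ 1 := by
  have := qq_add_pp_le_one hα hP hk1 hkM
  have := pp_pos hα hP k
  linarith

/-- i-th term of the Φ series -/
noncomputable def Pterm (α s : ℝ) (M : ℕ) (d : ℕ → ℕ) (i : ℕ) : ℝ :=
  (∏ j ∈ Finset.range i, pp α s M (d j)) * qq α s M (d i)

/-- cylinder weight -/
noncomputable def aa (α s : ℝ) (M : ℕ) (d : ℕ → ℕ) (n : ℕ) : ℝ :=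
  ∏ j ∈ Finset.range n, pp α s M (d j)

lemma aa_pos (hα : 1 < α) (hP : 1 ≤ PP α s M) (d : ℕ → ℕ) (n : ℕ) : 0 < aa α s M d n :=
  Finset.prod_pos fun j _ => pp_pos hα hP _

lemma aa_le_cc_pow (hα : 1 < α) (hs : 0 < s) (hP : 1 ≤ PP α s M)
    (hd1 : ∀ i, 1 ≤ d i) (n : ℕ) : aa α s M d n ≤ (cc α s) ^ n := by
  unfold aa
  calc ∏ j ∈ Finset.range n, pp α s M (d j) ≤ ∏ _j ∈ Finset.range n, cc α s :=
        Finset.prod_le_prod (fun j _ => (pp_pos hα hP _).le)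
          (fun j _ => pp_le_cc hα hs hP (hd1 j))
  _ = (cc α s) ^ n := by rw [Finset.prod_const, Finset.card_range]

lemma Pterm_nonneg (hα : 1 < α) (hP : 1 ≤ PP α s M) (i : ℕ) : 0 ≤ Pterm α s M d i :=
  mul_nonneg (by exact (aa_pos hα hP d i).le) (qq_nonneg hα hP _)

lemma Pterm_le (hα : 1 < α) (hs : 0 < s) (hP : 1 ≤ PP α s M)
    (hd1 : ∀ i, 1 ≤ d i) (hdM : ∀ i, d i ≤ M) (i : ℕ) :
    Pterm α s M d i ≤ (cc α s) ^ i := by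
  calc Pterm α s M d i ≤ aa α s M d i * 1 := by
        exact mul_le_mul_of_nonneg_left (qq_le_one hα hP (hd1 i) (hdM i))
          (aa_pos hα hP d i).le
  _ = aa α s M d i := mul_one _
  _ ≤ (cc α s) ^ i := aa_le_cc_pow hα hs hP hd1 i

lemma summable_Pterm (hα : 1 < α) (hs : 0 < s) (hP : 1 ≤ PP α s M)
    (hd1 : ∀ i, 1 ≤ d i) (hdM : ∀ i, d i ≤ M) : Summable (Pterm α s M d) :=
  Summable.of_nonneg_of_le (Pterm_nonneg hα hP) (Pterm_le hα hs hP hd1 hdM)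
    (summable_geometric_of_lt_one (cc_nonneg hα) (cc_lt_one hα hs))

/-- the Hölder map on digit sequences -/
noncomputable def Phi (α s : ℝ) (M : ℕ) (d : ℕ → ℕ) : ℝ := ∑' i, Pterm α s M d i

lemma Phi_nonneg (hα : 1 < α) (hP : 1 ≤ PP α s M) : 0 ≤ Phi α s M d :=
  tsum_nonneg (Pterm_nonneg hα hP)

lemma partial_Pterm_le (hα : 1 < α) (hP : 1 ≤ PP α s M)
    (hd1 : ∀ i, 1 ≤ d i) (hdM : ∀ i, d i ≤ M) (n : ℕ) :
    ∑ i ∈ Finset.range n, Pterm α s M d i ≤ 1 - aa α s M d n := by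
  have h1 : ∀ i, Pterm α s M d i ≤ aa α s M d i - aa α s M d (i+1) := by
    intro i
    have h2 : aa α s M d (i+1) = aa α s M d i * pp α s M (d i) := by
      unfold aa; rw [Finset.prod_range_succ]
    have h3 : qq α s M (d i) ≤ 1 - pp α s M (d i) := by
      have := qq_add_pp_le_one hα hP (hd1 i) (hdM i); linarith
    calc Pterm α s M d i ≤ aa α s M d i * (1 - pp α s M (d i)) :=
          mul_le_mul_of_nonneg_left h3 (aa_pos hα hP d i).le
    _ = aa α s M d i - aa α s M d (i+1) := by rw [h2]; ring
  calc ∑ i ∈ Finset.range n, Pterm α s M d i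
      ≤ ∑ i ∈ Finset.range n, (aa α s M d i - aa α s M d (i+1)) :=
        Finset.sum_le_sum fun i _ => h1 i
  _ = aa α s M d 0 - aa α s M d n := Finset.sum_range_sub' _ n
  _ = 1 - aa α s M d n := by unfold aa; rw [Finset.prod_range_zero]

lemma Phi_le_one (hα : 1 < α) (hs : 0 < s) (hP : 1 ≤ PP α s M)
    (hd1 : ∀ i, 1 ≤ d i) (hdM : ∀ i, d i ≤ M) : Phi α s M d ≤ 1 := by
  refine Summable.tsum_le_of_sum_range_le (summable_Pterm hα hs hP hd1 hdM) fun n => ?_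
  have := partial_Pterm_le hα hP hd1 hdM n
  have := aa_pos hα hP d n
  linarith

lemma Phi_prefix (hα : 1 < α) (hs : 0 < s) (hP : 1 ≤ PP α s M)
    (hd1 : ∀ i, 1 ≤ d i) (hdM : ∀ i, d i ≤ M) (n : ℕ) :
    Phi α s M d = (∑ i ∈ Finset.range n, Pterm α s M d i)
      + aa α s M d n * Phi α s M (fun i => d (i + n)) := by
  have hsum := summable_Pterm hα hs hP hd1 hdM
  unfold Phi
  rw [← Summable.sum_add_tsum_nat_add n hsum]
  congr 1
  rw [← tsum_mul_left]
  congr 1; funext i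
  unfold Pterm aa
  have hprod : ∏ j ∈ Finset.range (i + n), pp α s M (d j)
      = (∏ j ∈ Finset.range n, pp α s M (d j))
        * ∏ j ∈ Finset.range i, pp α s M (d (j + n)) := by
    rw [show i + n = n + i by ring, Finset.prod_range_add]
    congr 1
    exact Finset.prod_congr rfl fun j _ => by rw [add_comm]
  rw [hprod]
  ring

lemma Pterm_congr {n : ℕ} (h : ∀ j < n + 1, d j = d' j) :
    Pterm α s M d n = Pterm α s M d' n := by
  unfold Pterm
  rw [h n (by omega)]
  congr 1
  exact Finset.prod_congr rfl fun j hj => by rw [h j (by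
    have := Finset.mem_range.mp hj; omega)]

lemma aa_congr {n : ℕ} (h : ∀ j < n, d j = d' j) : aa α s M d n = aa α s M d' n :=
  Finset.prod_congr rfl fun j hj => by rw [h j (Finset.mem_range.mp hj)]

lemma Phi_close (hα : 1 < α) (hs : 0 < s) (hP : 1 ≤ PP α s M)
    (hd1 : ∀ i, 1 ≤ d i) (hdM : ∀ i, d i ≤ M)
    (hd1' : ∀ i, 1 ≤ d' i) (hdM' : ∀ i, d' i ≤ M) {n : ℕ}
    (hagree : ∀ j < n, d j = d' j) :
    |Phi α s M d - Phi α s M d'| ≤ aa α s M d n := by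
  rw [Phi_prefix hα hs hP hd1 hdM n, Phi_prefix hα hs hP hd1' hdM' n]
  have hS : (∑ i ∈ Finset.range n, Pterm α s M d i)
      = ∑ i ∈ Finset.range n, Pterm α s M d' i := by
    refine Finset.sum_congr rfl fun i hi => Pterm_congr fun j hj => hagree j ?_
    have := Finset.mem_range.mp hi; omega
  rw [hS, ← aa_congr (α := α) (s := s) (M := M) hagree]
  have heq : (∑ i ∈ Finset.range n, Pterm α s M d' i) + aa α s M d n
        * Phi α s M (fun i => d (i + n))
      - ((∑ i ∈ Finset.range n, Pterm α s M d' i) + aa α s M d n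
        * Phi α s M (fun i => d' (i + n)))
      = aa α s M d n * (Phi α s M (fun i => d (i + n))
        - Phi α s M (fun i => d' (i + n))) := by ring
  rw [heq, abs_mul, abs_of_pos (aa_pos hα hP d n)]
  have h1 : Phi α s M (fun i => d (i + n)) ≤ 1 :=
    Phi_le_one hα hs hP (fun i => hd1 _) (fun i => hdM _)
  have h2 : 0 ≤ Phi α s M (fun i => d (i + n)) := Phi_nonneg hα hP
  have h3 : Phi α s M (fun i => d' (i + n)) ≤ 1 :=
    Phi_le_one hα hs hP (fun i => hd1' _) (fun i => hdM' _)
  have h4 : 0 ≤ Phi α s M (fun i => d' (i + n)) := Phi_nonneg hα hP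
  have habs : |Phi α s M (fun i => d (i + n)) - Phi α s M (fun i => d' (i + n))| ≤ 1 :=
    abs_le.mpr ⟨by linarith, by linarith⟩
  calc aa α s M d n * |Phi α s M (fun i => d (i + n)) - Phi α s M (fun i => d' (i + n))|
      ≤ aa α s M d n * 1 := mul_le_mul_of_nonneg_left habs (aa_pos hα hP d n).le
  _ = aa α s M d n := mul_one _

end AE

namespace AE
variable {α s : ℝ} {d d' : ℕ → ℕ} {M : ℕ}

/-- the separation gap -/
noncomputable def gap (α : ℝ) (M : ℕ) : ℝ := (α - 1) * (α ^ (2*M))⁻¹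

lemma gap_pos (hα : 1 < α) : 0 < gap α M :=
  mul_pos (by linarith) (inv_pos.2 (pow_pos (apos hα) _))

/-- THE Hölder estimate -/
lemma Phi_holder (hα : 1 < α) (hs : 0 < s) (hP : 1 ≤ PP α s M)
    (hd1 : ∀ i, 1 ≤ d i) (hdM : ∀ i, d i ≤ M)
    (hd1' : ∀ i, 1 ≤ d' i) (hdM' : ∀ i, d' i ≤ M) :
    |Phi α s M d - Phi α s M d'|
      ≤ ((gap α M)⁻¹) ^ s * |alphaExpansion α d - alphaExpansion α d'| ^ s := by
  by_cases hdd : d = d'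
  · subst hdd
    simp only [sub_self, abs_zero]
    rw [Real.zero_rpow hs.ne', mul_zero]
  · have hex : ∃ i, d i ≠ d' i := by
      by_contra h
      push_neg at h
      exact hdd (funext h)
    classical
    set n := Nat.find hex with hn
    have hagree : ∀ j < n, d j = d' j := fun j hj =>
      of_not_not (Nat.find_min hex hj)
    have hne : d n ≠ d' n := Nat.find_spec hex
    have h1 : |Phi α s M d - Phi α s M d'| ≤ aa α s M d n :=
      Phi_close hα hs hP hd1 hdM hd1' hdM' hagree
    have h2 : aa α s M d n ≤ (RR α d n) ^ s := by
      unfold aa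
      calc ∏ j ∈ Finset.range n, pp α s M (d j)
          ≤ ∏ j ∈ Finset.range n, (rr α (d j)) ^ s :=
            Finset.prod_le_prod (fun j _ => (pp_pos hα hP _).le)
              (fun j _ => pp_le_rpow hα hP _)
      _ = (∏ j ∈ Finset.range n, rr α (d j)) ^ s :=
            Real.finset_prod_rpow _ _ (fun j _ => (rr_pos hα _).le) s
      _ = (RR α d n) ^ s := rfl
    have h3 : gap α M * RR α d n ≤ |alphaExpansion α d - alphaExpansion α d'| :=
      sep_at hα hd1 hd1' hdM hdM' hagree hne
    have h4 : (gap α M * RR α d n) ^ s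
        ≤ |alphaExpansion α d - alphaExpansion α d'| ^ s :=
      Real.rpow_le_rpow (mul_pos (gap_pos hα) (RR_pos hα d n)).le h3 hs.le
    have h5 : (RR α d n) ^ s
        = ((gap α M)⁻¹) ^ s * (gap α M * RR α d n) ^ s := by
      rw [← Real.mul_rpow (inv_pos.2 (gap_pos hα)).le
        (mul_pos (gap_pos hα) (RR_pos hα d n)).le]
      congr 1
      rw [← mul_assoc, inv_mul_cancel₀ (gap_pos hα).ne', one_mul]
    calc |Phi α s M d - Phi α s M d'| ≤ (RR α d n) ^ s := h1.trans h2
    _ = ((gap α M)⁻¹) ^ s * (gap α M * RR α d n) ^ s := h5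
    _ ≤ ((gap α M)⁻¹) ^ s * |alphaExpansion α d - alphaExpansion α d'| ^ s :=
        mul_le_mul_of_nonneg_left h4 (Real.rpow_nonneg (inv_pos.2 (gap_pos hα)).le s)

/-- greedy digit of y -/
noncomputable def dig (α s : ℝ) (M : ℕ) (y : ℝ) : ℕ :=
  @Nat.findGreatest (fun k => qq α s M k ≤ y) (fun k => Real.decidableLE _ _) M

lemma qq_one : qq α s M 1 = 0 := by unfold qq; simp

lemma dig_spec (hα : 1 < α) (hP : 1 ≤ PP α s M) (hM : 1 ≤ M) {y : ℝ}
    (hy0 : 0 ≤ y) (hy1 : y < 1) :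
    1 ≤ dig α s M y ∧ dig α s M y ≤ M ∧ qq α s M (dig α s M y) ≤ y
      ∧ y < qq α s M (dig α s M y) + pp α s M (dig α s M y) := by
  have hq1 : qq α s M 1 ≤ y := by rw [qq_one]; exact hy0
  have h1 : 1 ≤ dig α s M y := Nat.le_findGreatest hM hq1
  have h2 : dig α s M y ≤ M := Nat.findGreatest_le M
  have h3 : qq α s M (dig α s M y) ≤ y :=
    Nat.findGreatest_spec (P := fun k => qq α s M k ≤ y) hM hq1
  refine ⟨h1, h2, h3, ?_⟩
  rcases eq_or_lt_of_le h2 with heq | hlt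
  · have hfull : qq α s M M + pp α s M M = 1 := by
      unfold qq
      rw [← Finset.sum_Ico_succ_top hM, Finset.Ico_add_one_right_eq_Icc]
      exact sum_pp hα hP
    rw [heq, hfull]; exact hy1
  · have hng : ¬ qq α s M (dig α s M y + 1) ≤ y := by
      have hA : dig α s M y < dig α s M y + 1 := Nat.lt_succ_self _
      have hB : dig α s M y + 1 ≤ M := by omega
      exact Nat.findGreatest_is_greatest (P := fun k => qq α s M k ≤ y) hA hB
    push_neg at hng
    have hstep : qq α s M (dig α s M y + 1)
        = qq α s M (dig α s M y) + pp α s M (dig α s M y) := by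
      unfold qq
      rw [Finset.sum_Ico_succ_top h1]
    rw [← hstep]; exact hng

/-- greedy digit sequence state -/
noncomputable def Yseq (α s : ℝ) (M : ℕ) (y : ℝ) : ℕ → ℝ
  | 0 => y
  | (i+1) => (Yseq α s M y i - qq α s M (dig α s M (Yseq α s M y i)))
      / pp α s M (dig α s M (Yseq α s M y i))

lemma Yseq_mem (hα : 1 < α) (hP : 1 ≤ PP α s M) (hM : 1 ≤ M) {y : ℝ}
    (hy0 : 0 ≤ y) (hy1 : y < 1) :
    ∀ i, 0 ≤ Yseq α s M y i ∧ Yseq α s M y i < 1 := by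
  intro i
  induction i with
  | zero => exact ⟨hy0, hy1⟩
  | succ m ih =>
    obtain ⟨h0, h1⟩ := ih
    obtain ⟨_, _, h3, h4⟩ := dig_spec hα hP hM h0 h1
    have hp := pp_pos hα hP (dig α s M (Yseq α s M y m))
    have hYdef : Yseq α s M y (m+1) = (Yseq α s M y m
        - qq α s M (dig α s M (Yseq α s M y m)))
        / pp α s M (dig α s M (Yseq α s M y m)) := rfl
    rw [hYdef]
    constructor
    · exact div_nonneg (by linarith) hp.le
    · rw [div_lt_one hp]; linarith

/-- greedy digits -/
noncomputable def dseq (α s : ℝ) (M : ℕ) (y : ℝ) (i : ℕ) : ℕ :=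
  dig α s M (Yseq α s M y i)

lemma dseq_mem (hα : 1 < α) (hP : 1 ≤ PP α s M) (hM : 1 ≤ M) {y : ℝ}
    (hy0 : 0 ≤ y) (hy1 : y < 1) (i : ℕ) :
    1 ≤ dseq α s M y i ∧ dseq α s M y i ≤ M := by
  obtain ⟨h0, h1⟩ := Yseq_mem hα hP hM hy0 hy1 i
  obtain ⟨a, b, _, _⟩ := dig_spec hα hP hM h0 h1
  exact ⟨a, b⟩

lemma greedy_identity (hα : 1 < α) (hP : 1 ≤ PP α s M) (hM : 1 ≤ M) {y : ℝ}
    (hy0 : 0 ≤ y) (hy1 : y < 1) (n : ℕ) :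
    y = (∑ i ∈ Finset.range n, Pterm α s M (dseq α s M y) i)
      + aa α s M (dseq α s M y) n * Yseq α s M y n := by
  induction n with
  | zero =>
    unfold aa
    simp [Yseq]
  | succ m ih =>
    obtain ⟨h0, h1⟩ := Yseq_mem hα hP hM hy0 hy1 m
    have hp := pp_pos hα hP (dseq α s M y m)
    have hY : Yseq α s M y m = qq α s M (dseq α s M y m)
        + pp α s M (dseq α s M y m) * Yseq α s M y (m+1) := by
      have : Yseq α s M y (m+1) = (Yseq α s M y m - qq α s M (dseq α s M y m))
          / pp α s M (dseq α s M y m) := rfl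
      rw [this]
      field_simp
      ring
    rw [Finset.sum_range_succ]
    have haa : aa α s M (dseq α s M y) (m+1)
        = aa α s M (dseq α s M y) m * pp α s M (dseq α s M y m) := by
      unfold aa; rw [Finset.prod_range_succ]
    rw [haa]
    unfold Pterm
    calc y = (∑ i ∈ Finset.range m, Pterm α s M (dseq α s M y) i)
        + aa α s M (dseq α s M y) m * Yseq α s M y m := ih
    _ = _ := by rw [hY]; unfold aa Pterm; ring

/-- surjectivity of Φ onto [0,1) -/
lemma Phi_surj (hα : 1 < α) (hs : 0 < s) (hP : 1 ≤ PP α s M) (hM : 1 ≤ M) {y : ℝ}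
    (hy0 : 0 ≤ y) (hy1 : y < 1) :
    ∃ d : ℕ → ℕ, (∀ i, 1 ≤ d i) ∧ (∀ i, d i ≤ M) ∧ Phi α s M d = y := by
  set d := dseq α s M y with hd
  have hd1 : ∀ i, 1 ≤ d i := fun i => (dseq_mem hα hP hM hy0 hy1 i).1
  have hdM : ∀ i, d i ≤ M := fun i => (dseq_mem hα hP hM hy0 hy1 i).2
  refine ⟨d, hd1, hdM, ?_⟩
  have key : ∀ n : ℕ, |Phi α s M d - y| ≤ (cc α s) ^ n := by
    intro n
    have hid := greedy_identity hα hP hM hy0 hy1 n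
    rw [← hd] at hid
    have hpre := Phi_prefix hα hs hP hd1 hdM n
    have hdiff : Phi α s M d - y = aa α s M d n
        * (Phi α s M (fun i => d (i + n)) - Yseq α s M y n) := by
      calc Phi α s M d - y
          = ((∑ i ∈ Finset.range n, Pterm α s M d i)
              + aa α s M d n * Phi α s M (fun i => d (i + n)))
            - ((∑ i ∈ Finset.range n, Pterm α s M d i)
              + aa α s M d n * Yseq α s M y n) := by rw [← hpre, ← hid]
      _ = aa α s M d n * (Phi α s M (fun i => d (i + n)) - Yseq α s M y n) := by ring
    obtain ⟨hY0, hY1⟩ := Yseq_mem hα hP hM hy0 hy1 n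
    have hp0 : 0 ≤ Phi α s M (fun i => d (i + n)) := Phi_nonneg hα hP
    have hp1 : Phi α s M (fun i => d (i + n)) ≤ 1 :=
      Phi_le_one hα hs hP (fun i => hd1 _) (fun i => hdM _)
    have habs : |Phi α s M (fun i => d (i + n)) - Yseq α s M y n| ≤ 1 :=
      abs_le.mpr ⟨by linarith, by linarith⟩
    calc |Phi α s M d - y| = aa α s M d n
          * |Phi α s M (fun i => d (i + n)) - Yseq α s M y n| := by
          rw [hdiff, abs_mul, abs_of_pos (aa_pos hα hP d n)]
    _ ≤ aa α s M d n * 1 := mul_le_mul_of_nonneg_left habs (aa_pos hα hP d n).le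
    _ = aa α s M d n := mul_one _
    _ ≤ (cc α s) ^ n := aa_le_cc_pow hα hs hP hd1 n
  have htend : Filter.Tendsto (fun n : ℕ => (cc α s) ^ n) Filter.atTop (nhds 0) :=
    tendsto_pow_atTop_nhds_zero_of_lt_one (cc_nonneg hα) (cc_lt_one hα hs)
  have : |Phi α s M d - y| ≤ 0 :=
    ge_of_tendsto htend (Filter.Eventually.of_forall key)
  have := abs_nonneg (Phi α s M d - y)
  have : |Phi α s M d - y| = 0 := le_antisymm ‹|Phi α s M d - y| ≤ 0› this
  linarith [abs_eq_zero.mp this, sub_eq_zero.mp (abs_eq_zero.mp this)]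

/-- existence of a large enough M for a given exponent s < 1 -/
lemma exists_M (hα : 1 < α) (hs : 0 < s) (hs1 : s < 1) :
    ∃ M : ℕ, 1 ≤ M ∧ 1 ≤ PP α s M := by
  have hr0 : (0:ℝ) < (α - 1)/α := div_pos (by linarith) (apos hα)
  set β : ℝ := ((α - 1)/α) ^ (s - 1) with hβdef
  have hβ : 1 < β :=
    (Real.one_lt_rpow_iff_of_pos hr0).mpr (Or.inr ⟨ratio_lt_one hα, by linarith⟩)
  have hβ0 : 0 < β := by linarith
  have hβinv : β⁻¹ < 1 := by
    rw [inv_lt_one_iff₀]; right; exact hβ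
  have hεpos : (0:ℝ) < 1 - β⁻¹ := by linarith
  have hainv : α⁻¹ < 1 := inv_lt_one_of_one_lt₀ hα
  have hainv0 : (0:ℝ) ≤ α⁻¹ := (inv_pos.2 (apos hα)).le
  obtain ⟨M₀, hM₀⟩ := exists_pow_lt_of_lt_one hεpos hainv
  refine ⟨max M₀ 1, le_max_right _ _, ?_⟩
  set M := max M₀ 1 with hMdef
  have hpow : ((α:ℝ) ^ M)⁻¹ < 1 - β⁻¹ := by
    rw [← inv_pow]
    calc (α⁻¹ : ℝ) ^ M ≤ α⁻¹ ^ M₀ :=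
          pow_le_pow_of_le_one hainv0 hainv.le (le_max_left _ _)
    _ < 1 - β⁻¹ := hM₀
  -- termwise lower bound
  have hterm : ∀ k ∈ Finset.Icc 1 M, β * rr α k ≤ (rr α k) ^ s := by
    intro k hk
    obtain ⟨hk1, hkM⟩ := Finset.mem_Icc.mp hk
    have hrrpos := rr_pos hα k
    have h1 : β ≤ (rr α k) ^ (s - 1) := by
      rw [hβdef]
      exact Real.rpow_le_rpow_of_nonpos hrrpos (rr_le_ratio hα hk1) (by linarith)
    calc β * rr α k ≤ (rr α k) ^ (s - 1) * rr α k :=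
          mul_le_mul_of_nonneg_right h1 hrrpos.le
    _ = (rr α k) ^ s := by
        have h2 : (rr α k) ^ (s-1) * (rr α k) ^ (1:ℝ) = (rr α k) ^ s := by
          rw [← Real.rpow_add hrrpos]; norm_num
        rw [Real.rpow_one] at h2
        exact h2
  have hsum : β * (1 - (α ^ M)⁻¹) ≤ PP α s M := by
    unfold PP
    calc β * (1 - (α ^ M)⁻¹) = β * ∑ k ∈ Finset.Icc 1 M, rr α k := by
          rw [sum_rr hα]
    _ = ∑ k ∈ Finset.Icc 1 M, β * rr α k := Finset.mul_sum _ _ _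
    _ ≤ ∑ k ∈ Finset.Icc 1 M, (rr α k) ^ s := Finset.sum_le_sum hterm
  have hfinal : (1:ℝ) ≤ β * (1 - (α ^ M)⁻¹) := by
    have h1 : β⁻¹ ≤ 1 - (α ^ M)⁻¹ := by linarith
    calc (1:ℝ) = β * β⁻¹ := by field_simp
    _ ≤ β * (1 - (α ^ M)⁻¹) := mul_le_mul_of_nonneg_left h1 hβ0.le
  linarith

end AE

open scoped NNReal ENNReal

namespace AE
variable {α s : ℝ} {M : ℕ}

lemma dimH_ge (hα : 1 < α) {s : ℝ} (hs : 0 < s) (hs1 : s < 1) :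
    ENNReal.ofReal s ≤ dimH {x : ℝ | ∃ d : ℕ → ℕ,
        (∀ i, 1 ≤ d i) ∧ (∃ M : ℕ, ∀ i, d i ≤ M) ∧ alphaExpansion α d = x} := by
  classical
  obtain ⟨M, hM, hP⟩ := exists_M hα hs hs1
  set E := {x : ℝ | ∃ d : ℕ → ℕ,
      (∀ i, 1 ≤ d i) ∧ (∀ i, d i ≤ M) ∧ alphaExpansion α d = x} with hE
  set Creal : ℝ := ((gap α M)⁻¹) ^ s with hCreal
  have hCreal0 : 0 ≤ Creal := Real.rpow_nonneg (inv_pos.2 (gap_pos hα)).le s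
  set f : ℝ → ℝ := fun x =>
    if h : ∃ d : ℕ → ℕ, (∀ i, 1 ≤ d i) ∧ (∀ i, d i ≤ M) ∧ alphaExpansion α d = x
    then Phi α s M h.choose else 0 with hf
  have f_eq : ∀ d : ℕ → ℕ, (∀ i, 1 ≤ d i) → (∀ i, d i ≤ M) →
      f (alphaExpansion α d) = Phi α s M d := by
    intro d hd1 hdM
    have hex : ∃ d' : ℕ → ℕ, (∀ i, 1 ≤ d' i) ∧ (∀ i, d' i ≤ M)
        ∧ alphaExpansion α d' = alphaExpansion α d := ⟨d, hd1, hdM, rfl⟩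
    rw [hf]
    simp only [dif_pos hex]
    obtain ⟨he1, he2, he3⟩ := hex.choose_spec
    have := Phi_holder hα hs hP he1 he2 hd1 hdM
    rw [he3, sub_self, abs_zero, Real.zero_rpow hs.ne', mul_zero] at this
    have h0 := abs_nonneg (Phi α s M hex.choose - Phi α s M d)
    have : |Phi α s M hex.choose - Phi α s M d| = 0 := le_antisymm this h0
    have := abs_eq_zero.mp this
    linarith [sub_eq_zero.mp this]
  -- Hölder continuity of f on E
  have hhold : HolderOnWith Creal.toNNReal s.toNNReal f E := by
    rintro x ⟨d, hd1, hdM, rfl⟩ y ⟨d', hd1', hdM', rfl⟩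
    rw [f_eq d hd1 hdM, f_eq d' hd1' hdM']
    rw [edist_dist, edist_dist, Real.dist_eq, Real.dist_eq]
    have hcoe : ((s.toNNReal : ℝ≥0) : ℝ) = s := Real.coe_toNNReal s hs.le
    rw [hcoe]
    have h1 : (Creal.toNNReal : ℝ≥0∞) = ENNReal.ofReal Creal := rfl
    rw [h1, ENNReal.ofReal_rpow_of_nonneg (abs_nonneg _) hs.le,
      ← ENNReal.ofReal_mul hCreal0]
    exact ENNReal.ofReal_le_ofReal (Phi_holder hα hs hP hd1 hdM hd1' hdM')
  -- the image covers [0,1)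
  have himg : Set.Ico (0:ℝ) 1 ⊆ f '' E := by
    rintro y ⟨hy0, hy1⟩
    obtain ⟨d, hd1, hdM, hPhi⟩ := Phi_surj hα hs hP hM hy0 hy1
    exact ⟨alphaExpansion α d, ⟨d, hd1, hdM, rfl⟩, by rw [f_eq d hd1 hdM, hPhi]⟩
  -- dimension chain
  have hIco : dimH (Set.Ico (0:ℝ) 1) = 1 := by
    rw [Real.dimH_of_nonempty_interior (by
      rw [interior_Ico]
      exact ⟨1/2, by norm_num⟩)]
    simp
  have hr0 : 0 < s.toNNReal := Real.toNNReal_pos.mpr hs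
  have h2 : (1:ℝ≥0∞) ≤ dimH (f '' E) := hIco ▸ dimH_mono himg
  have h3 : dimH (f '' E) ≤ dimH E / (s.toNNReal : ℝ≥0∞) :=
    hhold.dimH_image_le hr0
  have h4 : (1:ℝ≥0∞) ≤ dimH E / (s.toNNReal : ℝ≥0∞) := h2.trans h3
  have h5 : (s.toNNReal : ℝ≥0∞) ≤ dimH E := by
    have := (ENNReal.le_div_iff_mul_le
      (Or.inl (by exact_mod_cast hr0.ne'))
      (Or.inl (by exact ENNReal.coe_ne_top))).mp h4
    rwa [one_mul] at this
  have h6 : E ⊆ {x : ℝ | ∃ d : ℕ → ℕ,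
      (∀ i, 1 ≤ d i) ∧ (∃ M : ℕ, ∀ i, d i ≤ M) ∧ alphaExpansion α d = x} := by
    rintro x ⟨d, hd1, hdM, h3'⟩
    exact ⟨d, hd1, ⟨M, hdM⟩, h3'⟩
  calc ENNReal.ofReal s = (s.toNNReal : ℝ≥0∞) := rfl
  _ ≤ dimH E := h5
  _ ≤ _ := dimH_mono h6

end AE

theorem bounded_digits_null_but_full_dimension (α : ℝ) (hα : 1 < α) :
    volume {x : ℝ | ∃ d : ℕ → ℕ,
        (∀ i, 1 ≤ d i) ∧ (∃ M : ℕ, ∀ i, d i ≤ M) ∧ alphaExpansion α d = x} = 0 ∧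
    dimH {x : ℝ | ∃ d : ℕ → ℕ,
        (∀ i, 1 ≤ d i) ∧ (∃ M : ℕ, ∀ i, d i ≤ M) ∧ alphaExpansion α d = x} = 1 := by
  constructor
  · exact AE.vol_S hα
  · apply le_antisymm
    · calc dimH {x : ℝ | ∃ d : ℕ → ℕ,
          (∀ i, 1 ≤ d i) ∧ (∃ M : ℕ, ∀ i, d i ≤ M) ∧ alphaExpansion α d = x}
          ≤ dimH (Set.univ : Set ℝ) := dimH_mono (Set.subset_univ _)
      _ = 1 := Real.dimH_univ
    · refine le_of_forall_lt_imp_le_of_dense fun w hw => ?_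
      have hwt : w ≠ ⊤ := hw.ne_top
      set σ : ℝ := max w.toReal (1/2) with hσ
      have hσ0 : 0 < σ := lt_of_lt_of_le (by norm_num) (le_max_right _ _)
      have hwr : w.toReal < 1 := by
        rw [← ENNReal.toReal_one]
        exact (ENNReal.toReal_lt_toReal hwt (by simp)).mpr hw
      have hσ1 : σ < 1 := max_lt hwr (by norm_num)
      have hkey := AE.dimH_ge hα hσ0 hσ1
      refine le_trans ?_ hkey
      calc w = ENNReal.ofReal w.toReal := (ENNReal.ofReal_toReal hwt).symm
      _ ≤ ENNReal.ofReal σ := ENNReal.ofReal_le_ofReal (le_max_left _ _)
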